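/- For every integer n > 1, there exists a positive integer a such that a is the order of some permutation in the alternating group A_{n+1} but a is not the order of any permutation in the alternating group A_n. -/
import Mathlib

lemma aux_sum_le_prod3 (T : Finset ℕ) (hT : ∀ p ∈ T, 3 ≤ p) :
    T.sum id ≤ T.prod id ∧ (T = ∅ ∨ 3 ≤ T.prod id) := by
  induction T using Finset.induction_on with
  | empty => simp
  | @insert a T ha ih =>
    have h3a : 3 ≤ a := hT a (Finset.mem_insert_self a T)
    obtain ⟨ih1, ih2⟩ := ih (fun p hp => hT p (Finset.mem_insert_of_mem hp))
    rw [Finset.sum_insert ha, Finset.prod_insert ha]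
    simp only [id_eq] at *
    rcases ih2 with rfl | h3p
    · simp [h3a]
    · exact ⟨by nlinarith, Or.inr (by nlinarith)⟩

lemma aux_prime_dvd_lcm {p : ℕ} (hp : p.Prime) :
    ∀ M : Multiset ℕ, p ∣ M.lcm → ∃ x ∈ M, p ∣ x := by
  intro M
  induction M using Multiset.induction_on with
  | empty =>
    intro h
    exact absurd (Nat.dvd_one.mp (by simpa using h)) hp.ne_one
  | cons a M ih =>
    intro h
    rw [Multiset.lcm_cons] at h
    have h2 : lcm a M.lcm ∣ a * M.lcm := lcm_dvd (dvd_mul_right _ _) (dvd_mul_left _ _)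
    rcases (Nat.Prime.dvd_mul hp).1 (h.trans h2) with h | h
    · exact ⟨a, Multiset.mem_cons_self a M, h⟩
    · obtain ⟨x, hx, hpx⟩ := ih h
      exact ⟨x, Multiset.mem_cons_of_mem hx, hpx⟩

lemma aux_cover : ∀ (k : ℕ) (S : Finset ℕ), S.card ≤ k →
    (∀ p ∈ S, Nat.Prime p ∧ 3 ≤ p) →
    ∀ M : Multiset ℕ, (∀ x ∈ M, 0 < x) → (∀ p ∈ S, ∃ x ∈ M, p ∣ x) →
    S.sum id ≤ M.sum := by
  intro k
  induction k with
  | zero =>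
    intro S hcard _ M _ _
    have : S = ∅ := Finset.card_eq_zero.mp (Nat.le_zero.mp hcard)
    simp [this]
  | succ k ih =>
    intro S hcard hS M hM hcov
    rcases S.eq_empty_or_nonempty with rfl | ⟨p₀, hp₀⟩
    · simp
    obtain ⟨x, hxM, hpx⟩ := hcov p₀ hp₀
    set T : Finset ℕ := S.filter (· ∣ x) with hT
    have hTsub : T ⊆ S := Finset.filter_subset _ _
    have hp₀T : p₀ ∈ T := Finset.mem_filter.mpr ⟨hp₀, hpx⟩
    have hxpos : 0 < x := hM x hxM
    have hprodT : T.prod id ∣ x := by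
      refine Finset.prod_primes_dvd x (fun p hp => ?_) (fun p hp => (Finset.mem_filter.mp hp).2)
      exact (hS p (hTsub hp)).1.prime
    have hTsum : T.sum id ≤ x :=
      le_trans (aux_sum_le_prod3 T (fun p hp => (hS p (hTsub hp)).2)).1
        (Nat.le_of_dvd hxpos hprodT)
    have hcard' : (S \ T).card ≤ k := by
      have h1 : T.card ≥ 1 := Finset.card_pos.mpr ⟨p₀, hp₀T⟩
      have h2 : (S \ T).card = S.card - T.card := Finset.card_sdiff_of_subset hTsub
      omega
    have hrec : (S \ T).sum id ≤ (M.erase x).sum := by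
      refine ih (S \ T) hcard' (fun p hp => hS p (Finset.sdiff_subset hp)) (M.erase x)
        (fun y hy => hM y (Multiset.mem_of_mem_erase hy)) ?_
      intro p hp
      obtain ⟨hpS, hpT⟩ := Finset.mem_sdiff.mp hp
      obtain ⟨y, hyM, hpy⟩ := hcov p hpS
      have hpnx : ¬ p ∣ x := fun hdvd => hpT (Finset.mem_filter.mpr ⟨hpS, hdvd⟩)
      have hyx : y ≠ x := fun h => hpnx (h ▸ hpy)
      exact ⟨y, (Multiset.mem_erase_of_ne hyx).mpr hyM, hpy⟩
    have hsum : M.sum = x + (M.erase x).sum := by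
      conv_lhs => rw [← Multiset.cons_erase hxM]
      rw [Multiset.sum_cons]
    have hsplit : T.sum id + (S \ T).sum id = S.sum id := by
      have h := Finset.sum_sdiff (f := id) hTsub
      simpa [add_comm] using h
    omega

lemma aux_richert_aux : ∀ q : ℕ, Nat.Prime q → 19 ≤ q → ∀ n : ℕ, 10 ≤ n → n ≤ 9 + q →
    ∃ S : Finset ℕ, (∀ p ∈ S, Nat.Prime p ∧ 3 ≤ p ∧ p < q) ∧ S.sum id = n := by
  intro q
  induction q using Nat.strong_induction_on with
  | _ q ih =>
    intro hq hq19 n hn10 hnq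
    rcases eq_or_lt_of_le hq19 with h19 | h19
    · -- base case q = 19
      subst h19
      interval_cases n
      · exact ⟨{3,7}, by decide, by decide⟩
      · exact ⟨{11}, by decide, by decide⟩
      · exact ⟨{5,7}, by decide, by decide⟩
      · exact ⟨{13}, by decide, by decide⟩
      · exact ⟨{3,11}, by decide, by decide⟩
      · exact ⟨{3,5,7}, by decide, by decide⟩
      · exact ⟨{3,13}, by decide, by decide⟩
      · exact ⟨{17}, by decide, by decide⟩
      · exact ⟨{5,13}, by decide, by decide⟩
      · exact ⟨{3,5,11}, by decide, by decide⟩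
      · exact ⟨{3,17}, by decide, by decide⟩
      · exact ⟨{3,5,13}, by decide, by decide⟩
      · exact ⟨{5,17}, by decide, by decide⟩
      · exact ⟨{3,7,13}, by decide, by decide⟩
      · exact ⟨{7,17}, by decide, by decide⟩
      · exact ⟨{5,7,13}, by decide, by decide⟩
      · exact ⟨{3,5,7,11}, by decide, by decide⟩
      · exact ⟨{3,7,17}, by decide, by decide⟩
      · exact ⟨{3,5,7,13}, by decide, by decide⟩
    · -- inductive step: q > 19
      set P : Finset ℕ := (Finset.range q).filter Nat.Prime with hP
      have h19P : 19 ∈ P := Finset.mem_filter.mpr ⟨Finset.mem_range.mpr h19, by norm_num⟩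
      have hPne : P.Nonempty := ⟨19, h19P⟩
      set q' : ℕ := P.max' hPne with hq'def
      have hq'P : q' ∈ P := P.max'_mem hPne
      have hq'prime : Nat.Prime q' := (Finset.mem_filter.mp hq'P).2
      have hq'lt : q' < q := Finset.mem_range.mp (Finset.mem_filter.mp hq'P).1
      have hq'19 : 19 ≤ q' := P.le_max' 19 h19P
      have hmax : ∀ r : ℕ, Nat.Prime r → r < q → r ≤ q' :=
        fun r hr hrq => P.le_max' r (Finset.mem_filter.mpr ⟨Finset.mem_range.mpr hrq, hr⟩)
      have hq2q' : q ≤ 2 * q' := by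
        obtain ⟨r, hrprime, hrgt, hrle⟩ :=
          Nat.exists_prime_lt_and_le_two_mul q' (by omega)
        by_contra hcon
        have : r < q := by omega
        have := hmax r hrprime this
        omega
      by_cases hcase : n ≤ 9 + q'
      · obtain ⟨S, hS1, hS2⟩ := ih q' hq'lt hq'prime hq'19 n hn10 hcase
        exact ⟨S, fun p hp => ⟨(hS1 p hp).1, (hS1 p hp).2.1, lt_trans (hS1 p hp).2.2 hq'lt⟩, hS2⟩
      · have h1 : 10 ≤ n - q' := by omega
        have h2 : n - q' ≤ 9 + q' := by omega
        obtain ⟨S, hS1, hS2⟩ := ih q' hq'lt hq'prime hq'19 (n - q') h1 h2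
        have hq'notS : q' ∉ S := fun h => absurd (hS1 q' h).2.2 (lt_irrefl q')
        refine ⟨insert q' S, ?_, ?_⟩
        · intro p hp
          rcases Finset.mem_insert.mp hp with rfl | hpS
          · exact ⟨hq'prime, by omega, hq'lt⟩
          · exact ⟨(hS1 p hpS).1, (hS1 p hpS).2.1, lt_trans (hS1 p hpS).2.2 hq'lt⟩
        · rw [Finset.sum_insert hq'notS, hS2]
          simp only [id_eq]
          omega

lemma aux_richert (n : ℕ) (hn : 10 ≤ n) :
    ∃ S : Finset ℕ, (∀ p ∈ S, Nat.Prime p ∧ 3 ≤ p) ∧ S.sum id = n := by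
  obtain ⟨q, hqle, hqprime⟩ := Nat.exists_infinite_primes (max (n - 9) 19)
  have h19 : 19 ≤ q := le_trans (le_max_right _ _) hqle
  have hnq : n ≤ 9 + q := by
    have := le_trans (le_max_left (n - 9) 19) hqle
    omega
  obtain ⟨S, hS1, hS2⟩ := aux_richert_aux q hqprime h19 n hn hnq
  exact ⟨S, fun p hp => ⟨(hS1 p hp).1, (hS1 p hp).2.1⟩, hS2⟩

lemma aux_rep (m : ℕ) (hm : 3 ≤ m) (h4 : m ≠ 4) (h6 : m ≠ 6) (h9 : m ≠ 9) :
    ∃ S : Finset ℕ, (∀ p ∈ S, Nat.Prime p ∧ 3 ≤ p) ∧ S.sum id = m := by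
  by_cases h10 : 10 ≤ m
  · exact aux_richert m h10
  · push_neg at h10
    interval_cases m
    · exact ⟨{3}, by decide, by decide⟩
    · omega
    · exact ⟨{5}, by decide, by decide⟩
    · omega
    · exact ⟨{7}, by decide, by decide⟩
    · exact ⟨{3,5}, by decide, by decide⟩
    · omega

lemma aux_odd_parity : ∀ M : Multiset ℕ, (∀ x ∈ M, Odd x) →
    Even (M.sum + Multiset.card M) := by
  intro M
  induction M using Multiset.induction_on with
  | empty => simp
  | cons a M ih =>
    intro h
    have ha : Odd a := h a (Multiset.mem_cons_self a M)
    have hM : Even (M.sum + Multiset.card M) := ih (fun x hx => h x (Multiset.mem_cons_of_mem hx))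
    rw [Multiset.sum_cons, Multiset.card_cons]
    obtain ⟨t, ht⟩ := ha
    obtain ⟨s, hs⟩ := hM
    exact ⟨t + s + 1, by omega⟩

lemma aux_NT (m : ℕ) (hm : 3 ≤ m) :
    ∃ M : Multiset ℕ, (∀ x ∈ M, 2 ≤ x) ∧ M.sum = m ∧ Even (M.sum + Multiset.card M) ∧
      ∀ N : Multiset ℕ, (∀ x ∈ N, 2 ≤ x) → Even (N.sum + Multiset.card N) →
        N.lcm = M.lcm → m ≤ N.sum := by
  by_cases h4 : m = 4
  · subst h4
    refine ⟨{2,2}, by decide, by decide, by decide, ?_⟩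
    intro N hN2 hNpar hNl
    have hlcm : N.lcm = 2 := by rw [hNl]; decide
    have hall : ∀ x ∈ N, x = 2 := by
      intro x hx
      have hdvd : x ∣ 2 := hlcm ▸ Multiset.dvd_lcm hx
      have h1 := Nat.le_of_dvd (by norm_num) hdvd
      have h2 := hN2 x hx
      omega
    have hrep := Multiset.eq_replicate_card.mpr hall
    have hsum : N.sum = 2 * Multiset.card N := by
      conv_lhs => rw [hrep]
      rw [Multiset.sum_replicate, smul_eq_mul]; omega
    have hc0 : Multiset.card N ≠ 0 := by
      intro h
      rw [Multiset.card_eq_zero.mp h] at hlcm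
      simp [Multiset.lcm_zero] at hlcm
    obtain ⟨s, hs⟩ := hNpar
    have hceven : Even (Multiset.card N) := ⟨s - Multiset.card N, by omega⟩
    obtain ⟨c, hc⟩ := hceven
    omega
  by_cases h6 : m = 6
  · subst h6
    refine ⟨{4,2}, by decide, by decide, by decide, ?_⟩
    intro N hN2 hNpar hNl
    have hlcm : N.lcm = 4 := by rw [hNl]; decide
    have hdvd : ∀ x ∈ N, x ∣ 4 := fun x hx => hlcm ▸ Multiset.dvd_lcm hx
    have hval : ∀ x ∈ N, x = 2 ∨ x = 4 := by
      intro x hx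
      have h1 := hdvd x hx
      have h2 := hN2 x hx
      have h3 := Nat.le_of_dvd (by norm_num) h1
      interval_cases x
      · omega
      · exact absurd h1 (by decide)
      · omega
    have hsum_even : 2 ∣ N.sum := by
      refine Multiset.dvd_sum (fun x hx => ?_)
      rcases hval x hx with rfl | rfl <;> norm_num
    have hcard_even : Even (Multiset.card N) := by
      obtain ⟨s, hs⟩ := hNpar
      obtain ⟨t, ht⟩ := hsum_even
      exact ⟨s - t, by omega⟩
    have h4mem : ∃ x ∈ N, x = 4 := by
      by_contra hcon
      push_neg at hcon
      have hd2 : N.lcm ∣ 2 := Multiset.lcm_dvd.mpr (fun x hx => by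
        rcases hval x hx with rfl | rfl
        · exact dvd_refl 2
        · exact absurd rfl (hcon 4 hx))
      rw [hlcm] at hd2
      exact absurd hd2 (by decide)
    obtain ⟨x, hxN, rfl⟩ := h4mem
    have hN' : N = 4 ::ₘ N.erase 4 := (Multiset.cons_erase hxN).symm
    have hcN : Multiset.card N = 1 + Multiset.card (N.erase 4) := by
      conv_lhs => rw [hN']
      rw [Multiset.card_cons]
      omega
    obtain ⟨c, hc⟩ := hcard_even
    have hcard1 : 1 ≤ Multiset.card (N.erase 4) := by omega
    have hpos : 0 < Multiset.card (N.erase 4) := by omega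
    obtain ⟨y, hy⟩ := Multiset.card_pos_iff_exists_mem.mp hpos
    have hy2 : 2 ≤ y := hN2 y (Multiset.mem_of_mem_erase hy)
    have hysum : y ≤ (N.erase 4).sum :=
      Multiset.single_le_sum (fun x _ => Nat.zero_le x) y hy
    have : N.sum = 4 + (N.erase 4).sum := by
      conv_lhs => rw [hN']
      rw [Multiset.sum_cons]
    omega
  by_cases h9 : m = 9
  · subst h9
    refine ⟨{9}, by decide, by decide, by decide, ?_⟩
    intro N hN2 hNpar hNl
    have hlcm : N.lcm = 9 := by rw [hNl]; decide
    have h9mem : ∃ x ∈ N, x = 9 := by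
      by_contra hcon
      push_neg at hcon
      have hd3 : N.lcm ∣ 3 := Multiset.lcm_dvd.mpr (fun x hx => by
        have h1 : x ∣ 9 := hlcm ▸ Multiset.dvd_lcm hx
        have h2 := hN2 x hx
        have h3 := Nat.le_of_dvd (by norm_num) h1
        have hx9 := hcon x hx
        interval_cases x <;>
          first
            | (exact absurd h1 (by decide))
            | (exact dvd_refl 3)
            | (exact absurd rfl hx9))
      rw [hlcm] at hd3
      exact absurd hd3 (by decide)
    obtain ⟨x, hxN, rfl⟩ := h9mem
    exact Multiset.single_le_sum (fun x _ => Nat.zero_le x) 9 hxN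
  · -- general case
    obtain ⟨S, hS, hSsum⟩ := aux_rep m hm h4 h6 h9
    refine ⟨S.val, ?_, ?_, ?_, ?_⟩
    · intro x hx
      have := hS x hx
      omega
    · rw [← hSsum, Finset.sum, Multiset.map_id]
    · refine aux_odd_parity S.val (fun x hx => ?_)
      have := hS x hx
      exact this.1.odd_of_ne_two (by omega)
    · intro N hN2 hNpar hNl
      have hMsum : (S.val : Multiset ℕ).sum = m := by
        rw [← hSsum, Finset.sum, Multiset.map_id]
      have hcov : ∀ p ∈ S, ∃ x ∈ N, p ∣ x := by
        intro p hp
        have h1 : p ∣ (S.val : Multiset ℕ).lcm := Multiset.dvd_lcm hp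
        rw [← hNl] at h1
        exact aux_prime_dvd_lcm (hS p hp).1 N h1
      have := aux_cover S.card S le_rfl hS N (fun x hx => by have := hN2 x hx; omega) hcov
      omega

theorem stmt_10 (n : ℕ) (hn : 1 < n) :
    ∃ a : ℕ, (∃ g : alternatingGroup (Fin (n + 1)), orderOf g = a) ∧
      ¬(∃ g : alternatingGroup (Fin n), orderOf g = a) := by
  obtain ⟨M, hM2, hMsum, hMpar, hMmin⟩ := aux_NT (n + 1) (by omega)
  refine ⟨M.lcm, ?_, ?_⟩
  · have hcard : M.sum ≤ Fintype.card (Fin (n + 1)) := by rw [Fintype.card_fin]; omega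
    obtain ⟨σ, hσ⟩ := (Equiv.Perm.exists_with_cycleType_iff (α := Fin (n + 1))).mpr ⟨hcard, hM2⟩
    have hsign : Equiv.Perm.sign σ = 1 := by
      rw [Equiv.Perm.sign_of_cycleType, hσ]
      exact Even.neg_one_pow hMpar
    have hmem : σ ∈ alternatingGroup (Fin (n + 1)) := Equiv.Perm.mem_alternatingGroup.mpr hsign
    refine ⟨⟨σ, hmem⟩, ?_⟩
    rw [Subgroup.orderOf_mk, ← Equiv.Perm.lcm_cycleType, hσ]
  · rintro ⟨g, hg⟩
    set σ : Equiv.Perm (Fin n) := (g : Equiv.Perm (Fin n)) with hσdef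
    have hord : orderOf σ = M.lcm := by
      rw [hσdef, Subgroup.orderOf_coe, hg]
    have hsign : Equiv.Perm.sign σ = 1 := Equiv.Perm.mem_alternatingGroup.mp g.2
    have hpar : Even (σ.cycleType.sum + Multiset.card σ.cycleType) := by
      rw [Equiv.Perm.sign_of_cycleType] at hsign
      exact (neg_one_pow_eq_one_iff_even (by decide)).mp hsign
    have h2 : ∀ x ∈ σ.cycleType, 2 ≤ x := fun _ hx => Equiv.Perm.two_le_of_mem_cycleType hx
    have hlcm : σ.cycleType.lcm = M.lcm := by rw [Equiv.Perm.lcm_cycleType, hord]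
    have hmin := hMmin σ.cycleType h2 hpar hlcm
    have hsum : σ.cycleType.sum ≤ n := by
      rw [Equiv.Perm.sum_cycleType]
      exact le_trans (Finset.card_le_univ _) (le_of_eq (Fintype.card_fin n))
    omega
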